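/- Suppose α ∈ (0, 1/(1+ω)] with ω ≥ 0 and let V' := (1−α) V + α S + α ξ where ξ has conditional mean 0 given (V,S) and conditional second moment E[‖ξ‖² | V,S] ≤ ω ‖Δ‖² with Δ := S − V. Then E[‖V' − s‖² | V, S] ≤ (1−α)‖V − s‖² + α ‖S − s‖² + α(α(1+ω) − 1)‖Δ‖² for every fixed s ∈ ℝ^q, and in particular E[‖V' − s‖² | V,S] ≤ (1−α)‖V − s‖² + α ‖S − s‖². -/

import Mathlib

open MeasureTheory

theorem aux_condexp_proj_zero (q : ℕ) (Ω : Type*) (m : MeasurableSpace Ω)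
    [m0 : MeasurableSpace Ω] (μ : Measure Ω) [IsProbabilityMeasure μ]
    (ξ : Ω → EuclideanSpace ℝ (Fin q)) (hmle : m ≤ m0)
    (hξ : MemLp ξ 2 μ) (hmean : μ[ξ | m] =ᵐ[μ] 0) (i : Fin q) :
    μ[fun a => ξ a i | m] =ᵐ[μ] 0 := by
  haveI : SigmaFinite (μ.trim hmle) := inferInstance
  have hξint : Integrable ξ μ := hξ.integrable one_le_two
  have hξi : Integrable (fun a => ξ a i) μ :=
    ((EuclideanSpace.proj (𝕜 := ℝ) i).comp_memLp' hξ).integrable one_le_two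
  have key : ∀ t : Set Ω, MeasurableSet[m] t → μ t < ⊤ →
      ∫ a in t, (0:ℝ) ∂μ = ∫ a in t, ξ a i ∂μ := by
    intro t ht hμt
    have h1 : ∫ a in t, ξ a i ∂μ = (EuclideanSpace.proj (𝕜 := ℝ) i) (∫ a in t, ξ a ∂μ) :=
      (EuclideanSpace.proj (𝕜 := ℝ) i).integral_comp_comm hξint.integrableOn
    have h2 : ∫ a in t, ξ a ∂μ = ∫ a in t, (μ[ξ|m]) a ∂μ :=
      (setIntegral_condExp hmle hξint ht).symm
    have h3 : ∫ a in t, (μ[ξ|m]) a ∂μ = 0 := by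
      rw [setIntegral_congr_ae (hmle t ht) (hmean.mono fun a ha _ => ha)]
      simp
    simp [h1, h2, h3]
  have h0 : (0 : Ω → ℝ) =ᵐ[μ] μ[fun a => ξ a i | m] :=
    ae_eq_condExp_of_forall_setIntegral_eq hmle hξi
      (fun t _ _ => (integrable_zero Ω ℝ μ).integrableOn) key
      (StronglyMeasurable.aestronglyMeasurable
        (stronglyMeasurable_zero : StronglyMeasurable[m] (0 : Ω → ℝ)))
  exact h0.symm

theorem aux_memory_update (q : ℕ) (Ω : Type*) (m : MeasurableSpace Ω)
    [m0 : MeasurableSpace Ω] (μ : Measure Ω) [IsProbabilityMeasure μ]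
    (α ω : ℝ) (hω : 0 ≤ ω) (hα0 : 0 < α) (hα : α ≤ 1 / (1 + ω))
    (V S ξ : Ω → EuclideanSpace ℝ (Fin q))
    (hm : m = MeasurableSpace.comap (fun a => (V a, S a)) inferInstance)
    (hmle : m ≤ m0)
    (hV : MemLp V 2 μ) (hS : MemLp S 2 μ) (hξ : MemLp ξ 2 μ)
    (hmean : μ[ξ | m] =ᵐ[μ] 0)
    (hvar : ∀ᵐ a ∂μ, (μ[fun b => ‖ξ b‖ ^ 2 | m]) a ≤ ω * ‖S a - V a‖ ^ 2)
    (V' : Ω → EuclideanSpace ℝ (Fin q))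
    (hV' : ∀ a, V' a = (1 - α) • V a + α • S a + α • ξ a)
    (s : EuclideanSpace ℝ (Fin q)) :
      (∀ᵐ a ∂μ, (μ[fun b => ‖V' b - s‖ ^ 2 | m]) a
        ≤ (1 - α) * ‖V a - s‖ ^ 2 + α * ‖S a - s‖ ^ 2
          + α * (α * (1 + ω) - 1) * ‖S a - V a‖ ^ 2) ∧
      (∀ᵐ a ∂μ, (μ[fun b => ‖V' b - s‖ ^ 2 | m]) a
        ≤ (1 - α) * ‖V a - s‖ ^ 2 + α * ‖S a - s‖ ^ 2) := by
  have h1ω : (0:ℝ) < 1 + ω := by linarith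
  haveI : SigmaFinite (μ.trim hmle) := inferInstance
  -- measurability of V and S w.r.t. m
  have hVSm : Measurable[m] (fun a => (V a, S a)) := by
    rw [hm]; exact measurable_iff_comap_le.mpr le_rfl
  have hVm : Measurable[m] V := measurable_fst.comp hVSm
  have hSm : Measurable[m] S := measurable_snd.comp hVSm
  -- the m-measurable part W
  set W : Ω → EuclideanSpace ℝ (Fin q) :=
    fun a => (1 - α) • (V a - s) + α • (S a - s) with hWdef
  have hWm : StronglyMeasurable[m] W :=
    ((hVm.stronglyMeasurable.sub stronglyMeasurable_const).const_smul (1 - α)).add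
      ((hSm.stronglyMeasurable.sub stronglyMeasurable_const).const_smul α)
  have hWL2 : MemLp W 2 μ :=
    ((hV.sub (memLp_const s)).const_smul (1 - α)).add
      ((hS.sub (memLp_const s)).const_smul α)
  -- coordinates
  have hWi : ∀ i, MemLp (fun a => W a i) 2 μ := fun i =>
    (EuclideanSpace.proj (𝕜 := ℝ) i).comp_memLp' hWL2
  have hξi : ∀ i, MemLp (fun a => ξ a i) 2 μ := fun i =>
    (EuclideanSpace.proj (𝕜 := ℝ) i).comp_memLp' hξ
  have hWim : ∀ i, StronglyMeasurable[m] (fun a => W a i) := fun i =>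
    (EuclideanSpace.proj (𝕜 := ℝ) i).continuous.comp_stronglyMeasurable hWm
  have hmean_i : ∀ i, μ[fun a => ξ a i | m] =ᵐ[μ] 0 := fun i =>
    aux_condexp_proj_zero q Ω m μ ξ hmle hξ hmean i
  -- integrability facts
  have hWiξi_int : ∀ i, Integrable (fun a => W a i * ξ a i) μ := fun i =>
    memLp_one_iff_integrable.mp ((hξi i).smul (r := 1) (hWi i))
  set g : Ω → ℝ := fun a => ∑ i, W a i * ξ a i with hgdef
  set n : Ω → ℝ := fun a => ‖ξ a‖ ^ 2 with hndef
  set wsq : Ω → ℝ := fun a => ‖W a‖ ^ 2 with hwsqdef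
  have hgint : Integrable g μ := by
    have := integrable_finset_sum (μ := μ) Finset.univ (fun i (_ : i ∈ Finset.univ) => hWiξi_int i)
    simpa [hgdef] using this
  have hnint : Integrable n μ := (memLp_two_iff_integrable_sq_norm hξ.aestronglyMeasurable).mp hξ
  have hwsqint : Integrable wsq μ :=
    (memLp_two_iff_integrable_sq_norm hWL2.aestronglyMeasurable).mp hWL2
  -- cross term vanishes
  have hcross : μ[g | m] =ᵐ[μ] 0 := by
    have hsum : μ[g | m] =ᵐ[μ] ∑ i, μ[fun a => W a i * ξ a i | m] := by
      have hge : g = ∑ i, (fun a => W a i * ξ a i) := by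
        funext a; simp [hgdef, Finset.sum_apply]
      rw [hge]
      exact condExp_finset_sum (fun i _ => hWiξi_int i) m
    refine hsum.trans ?_
    have hterm : ∀ i : Fin q, μ[fun a => W a i * ξ a i | m] =ᵐ[μ] 0 := by
      intro i
      have h1 : μ[(fun a => W a i) * (fun a => ξ a i) | m]
          =ᵐ[μ] (fun a => W a i) * μ[fun a => ξ a i | m] :=
        condExp_mul_of_stronglyMeasurable_left (hWim i) (hWiξi_int i) ((hξi i).integrable one_le_two)
      refine h1.trans ?_
      filter_upwards [hmean_i i] with a ha
      simp [ha]
    have hall : ∀ᵐ a ∂μ, ∀ i : Fin q, (μ[fun a => W a i * ξ a i | m]) a = 0 :=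
      (ae_all_iff).mpr fun i => hterm i
    filter_upwards [hall] with a ha
    simp [Finset.sum_apply, ha]
  -- pointwise decomposition
  have hdecomp : (fun b => ‖V' b - s‖ ^ 2) = wsq + (2 * α) • g + (α ^ 2) • n := by
    funext a
    have hWs : V' a - s = W a + α • ξ a := by
      rw [hV' a, hWdef]; module
    have hinner : (inner ℝ (W a) (ξ a) : ℝ) = g a := by
      simp [hgdef, PiLp.inner_apply, RCLike.inner_apply, starRingEnd_apply, mul_comm]
    simp only [Pi.add_apply, Pi.smul_apply, smul_eq_mul, hwsqdef, hndef]
    rw [hWs, norm_add_sq_real, real_inner_smul_right, norm_smul, mul_pow,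
      Real.norm_eq_abs, sq_abs, hinner]
    ring
  -- conditional expectation of the decomposition
  have hmain : μ[fun b => ‖V' b - s‖ ^ 2 | m]
      =ᵐ[μ] fun a => ‖W a‖ ^ 2 + α ^ 2 * ((μ[n | m]) a) := by
    rw [hdecomp]
    have e1 : μ[wsq + (2 * α) • g + (α ^ 2) • n | m]
        =ᵐ[μ] μ[wsq + (2 * α) • g | m] + μ[(α ^ 2) • n | m] :=
      condExp_add (hwsqint.add (hgint.smul (2 * α))) (hnint.smul (α ^ 2)) m
    have e2 : μ[wsq + (2 * α) • g | m] =ᵐ[μ] μ[wsq | m] + μ[(2 * α) • g | m] :=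
      condExp_add hwsqint (hgint.smul (2 * α)) m
    have e3 : μ[(2 * α) • g | m] =ᵐ[μ] (2 * α) • μ[g | m] := condExp_smul (2 * α) g m
    have e4 : μ[(α ^ 2) • n | m] =ᵐ[μ] (α ^ 2) • μ[n | m] := condExp_smul (α ^ 2) n m
    have e5 : μ[wsq | m] = wsq := by
      refine condExp_of_stronglyMeasurable hmle ?_ hwsqint
      have : StronglyMeasurable[m] (fun a => ‖W a‖ * ‖W a‖) := hWm.norm.mul hWm.norm
      simpa [hwsqdef, pow_two] using this
    filter_upwards [e1, e2, e3, e4, hcross] with a h1 h2 h3 h4 h5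
    simp only [Pi.add_apply] at h1 h2
    rw [h1, h2, h3, h4, e5]
    simp only [Pi.smul_apply, smul_eq_mul, h5, Pi.zero_apply, hwsqdef]
    ring
  -- polarization identity
  have hpol : ∀ a, ‖W a‖ ^ 2
      = (1 - α) * ‖V a - s‖ ^ 2 + α * ‖S a - s‖ ^ 2 - α * (1 - α) * ‖S a - V a‖ ^ 2 := by
    intro a
    have hyx : S a - V a = (S a - s) - (V a - s) := by abel
    have e1 := norm_add_sq_real ((1 - α) • (V a - s)) (α • (S a - s))
    have e2 := norm_sub_sq_real (S a - s) (V a - s)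
    rw [real_inner_smul_left, real_inner_smul_right, norm_smul, norm_smul,
      Real.norm_eq_abs, Real.norm_eq_abs, mul_pow, mul_pow, sq_abs, sq_abs] at e1
    have e3 : (inner ℝ (V a - s) (S a - s) : ℝ) = inner ℝ (S a - s) (V a - s) :=
      real_inner_comm (S a - s) (V a - s)
    rw [hyx, hWdef]
    linear_combination e1 + α * (1 - α) * e2 + 2 * α * (1 - α) * e3
  -- first claim
  have hfirst : ∀ᵐ a ∂μ, (μ[fun b => ‖V' b - s‖ ^ 2 | m]) a
      ≤ (1 - α) * ‖V a - s‖ ^ 2 + α * ‖S a - s‖ ^ 2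
        + α * (α * (1 + ω) - 1) * ‖S a - V a‖ ^ 2 := by
    filter_upwards [hmain, hvar] with a h1 h2
    rw [h1, hpol a]
    nlinarith [h2, sq_nonneg ‖S a - V a‖, sq_nonneg α]
  refine ⟨hfirst, ?_⟩
  filter_upwards [hfirst] with a h1
  have hαω : α * (1 + ω) ≤ 1 := by
    rw [le_div_iff₀ h1ω] at hα; linarith
  have hneg : α * (α * (1 + ω) - 1) * ‖S a - V a‖ ^ 2 ≤ 0 := by
    have h2 : α * (α * (1 + ω) - 1) ≤ 0 := by nlinarith
    nlinarith [sq_nonneg ‖S a - V a‖]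
  linarith

theorem memory_update_contraction (q : ℕ) (Ω : Type*)
    [m0 : MeasurableSpace Ω] (μ : Measure Ω) [IsProbabilityMeasure μ]
    (α ω : ℝ) (hω : 0 ≤ ω) (hα0 : 0 < α) (hα : α ≤ 1 / (1 + ω))
    (V S ξ : Ω → EuclideanSpace ℝ (Fin q))
    (m : MeasurableSpace Ω)
    (hm : m = MeasurableSpace.comap (fun a => (V a, S a)) inferInstance)
    (hmle : m ≤ m0)
    (hV : MemLp V 2 μ) (hS : MemLp S 2 μ) (hξ : MemLp ξ 2 μ)
    (hmean : μ[ξ | m] =ᵐ[μ] 0)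
    (hvar : ∀ᵐ a ∂μ, (μ[fun b => ‖ξ b‖ ^ 2 | m]) a ≤ ω * ‖S a - V a‖ ^ 2)
    (V' : Ω → EuclideanSpace ℝ (Fin q))
    (hV' : ∀ a, V' a = (1 - α) • V a + α • S a + α • ξ a) :
    ∀ s : EuclideanSpace ℝ (Fin q),
      (∀ᵐ a ∂μ, (μ[fun b => ‖V' b - s‖ ^ 2 | m]) a
        ≤ (1 - α) * ‖V a - s‖ ^ 2 + α * ‖S a - s‖ ^ 2
          + α * (α * (1 + ω) - 1) * ‖S a - V a‖ ^ 2) ∧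
      (∀ᵐ a ∂μ, (μ[fun b => ‖V' b - s‖ ^ 2 | m]) a
        ≤ (1 - α) * ‖V a - s‖ ^ 2 + α * ‖S a - s‖ ^ 2) :=
  fun s => aux_memory_update q Ω m (m0 := m0) μ α ω hω hα0 hα V S ξ hm hmle hV hS hξ hmean hvar V' hV' s
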